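/- For every k ≥ 2 and every n ≥ 1, the generalized Lucas polynomial G_n lies in the kernel of T_1: (∂/∂t₁)²G_n − Σ_{j=1}^k t_j·(∂/∂t₂)(∂/∂t_j)G_n − (∂/∂t₂)G_n = 0. -/

import Mathlib

open MvPolynomial Finset

/-- The weight coefficient `A_ω(α)` of Theorem 2.1 (for `α ≠ 0`):
`A_ω(α) = multinomial(α) · (Σ α_i ω_i) / (Σ α_i)`. -/
noncomputable def Aw {k : ℕ} (ω : Fin k → ℝ) (α : Fin k → ℕ) : ℝ :=
  (Nat.multinomial Finset.univ α : ℝ) * (∑ i, (α i : ℝ) * ω i) / (∑ i, (α i : ℝ))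

/-- The isobaric degree `Σ_{i=1}^k i·α_i` of an exponent vector. -/
def isoDeg {k : ℕ} (α : Fin k → ℕ) : ℕ := ∑ i, (i.1 + 1) * α i

/-- The (finite) set of exponent vectors of isobaric degree `n`. -/
def wipIndex (k n : ℕ) : Finset (Fin k → ℕ) :=
  (Fintype.piFinset fun _ : Fin k => Finset.range (n + 1)).filter fun α => isoDeg α = n

/-- The weighted isobaric polynomial `P_{n,ω} = Σ_α A_ω(α)·t^α`. -/
noncomputable def WIP (k n : ℕ) (ω : Fin k → ℝ) : MvPolynomial (Fin k) ℝ :=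
  ∑ α ∈ wipIndex k n, MvPolynomial.monomial (Finsupp.equivFunOnFinite.symm α) (Aw ω α)

/-- The operator `T_m(P) = D₁₁P − Σ_j t_j D_{2j}P − m·D₂P`. -/
noncomputable def Tm (k : ℕ) (hk : 2 ≤ k) (m : ℝ) (P : MvPolynomial (Fin k) ℝ) :
    MvPolynomial (Fin k) ℝ :=
  pderiv (⟨0, by omega⟩ : Fin k) (pderiv (⟨0, by omega⟩ : Fin k) P)
    - ∑ j : Fin k, X j * pderiv (⟨1, by omega⟩ : Fin k) (pderiv j P)
    - C m * pderiv (⟨1, by omega⟩ : Fin k) P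

/-- The `j`-th element `γ^{(j)}` of the string generated by `γ`. -/
def strElem (k : ℕ) (hk : 2 ≤ k) (γ : Fin k → ℕ) (j : ℕ) : Fin k → ℕ :=
  fun i => if i = (⟨0, by omega⟩ : Fin k) then γ i + 2 * j
    else if i = (⟨1, by omega⟩ : Fin k) then γ i - j else γ i

/-- The `ω`-weighted string generated by `γ`:
`S_ω(γ) = Σ_{j=0}^{γ₂} A_ω(γ^{(j)})·t^{γ^{(j)}}`. -/
noncomputable def strPoly (k : ℕ) (hk : 2 ≤ k) (ω : Fin k → ℝ) (γ : Fin k → ℕ) :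
    MvPolynomial (Fin k) ℝ :=
  ∑ j ∈ Finset.range (γ (⟨1, by omega⟩ : Fin k) + 1),
    MvPolynomial.monomial (Finsupp.equivFunOnFinite.symm (strElem k hk γ j))
      (Aw ω (strElem k hk γ j))

/-- The generalized Lucas polynomial `G_n = P_{n,ν}`, `ν_i = i`. -/
noncomputable def Gpoly (k n : ℕ) : MvPolynomial (Fin k) ℝ :=
  WIP k n (fun i => (i.1 + 1 : ℝ))


section Aux

/-- Coefficient of a partial derivative. -/
lemma coeff_pderiv' {k : ℕ} (i : Fin k) (d : Fin k →₀ ℕ) (P : MvPolynomial (Fin k) ℝ) :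
    MvPolynomial.coeff d (pderiv i P)
      = ((d i : ℝ) + 1) * MvPolynomial.coeff (d + Finsupp.single i 1) P := by
  induction P using MvPolynomial.induction_on' with
  | add p q hp hq => simp only [map_add, MvPolynomial.coeff_add, hp, hq]; ring
  | monomial s a =>
    rw [pderiv_monomial, MvPolynomial.coeff_monomial, MvPolynomial.coeff_monomial]
    by_cases h : s = d + Finsupp.single i 1
    · subst h
      have h1 : d + Finsupp.single i 1 - Finsupp.single i 1 = d := by
        ext x
        rw [Finsupp.tsub_apply]
        simp only [Finsupp.add_apply, Finsupp.single_apply]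
        split_ifs <;> omega
      rw [if_pos h1, if_pos rfl]
      have h2 : (d + Finsupp.single i 1 : Fin k →₀ ℕ) i = d i + 1 := by simp
      rw [h2]
      push_cast
      ring
    · rw [if_neg h]
      by_cases h2 : s - Finsupp.single i 1 = d
      · have hsi : s i = 0 := by
          by_contra hne
          apply h
          ext x
          have hx := DFunLike.congr_fun h2 x
          rw [Finsupp.tsub_apply] at hx
          simp only [Finsupp.add_apply, Finsupp.single_apply] at hx ⊢
          rcases eq_or_ne i x with rfl | hix
          · simp at hx ⊢
            omega
          · simp only [if_neg hix] at hx ⊢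
            omega
        rw [if_pos h2, hsi]
        simp
      · rw [if_neg h2]; ring

lemma coe_add_single {k : ℕ} (d : Fin k →₀ ℕ) (i : Fin k) :
    ⇑(d + Finsupp.single i 1 : Fin k →₀ ℕ) = Function.update (⇑d) i (d i + 1) := by
  funext x
  rcases eq_or_ne x i with rfl | hx
  · simp
  · simp [Finsupp.single_apply, Ne.symm hx, Function.update_of_ne hx]

lemma sum_coe_add_single {k : ℕ} (d : Fin k →₀ ℕ) (i : Fin k) :
    ∑ j, (((d + Finsupp.single i 1 : Fin k →₀ ℕ) j : ℕ) : ℝ)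
      = (∑ j, ((d j : ℕ) : ℝ)) + 1 := by
  simp only [Finsupp.add_apply]
  push_cast
  rw [Finset.sum_add_distrib]
  congr 1
  simp [Finsupp.single_apply]

lemma isoDeg_add_single {k : ℕ} (d : Fin k →₀ ℕ) (i : Fin k) :
    isoDeg ⇑(d + Finsupp.single i 1 : Fin k →₀ ℕ) = isoDeg ⇑d + (i.1 + 1) := by
  unfold isoDeg
  simp only [Finsupp.add_apply, mul_add]
  rw [Finset.sum_add_distrib]
  congr 1
  simp [Finsupp.single_apply]

/-- `Nat.multinomial` under a unit increment of one coordinate. -/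
lemma mult_succ {k : ℕ} (α : Fin k → ℕ) (i : Fin k) :
    (α i + 1) * Nat.multinomial Finset.univ (Function.update α i (α i + 1))
      = ((∑ j, α j) + 1) * Nat.multinomial Finset.univ α := by
  have h1 := Nat.multinomial_spec Finset.univ α
  have h2 := Nat.multinomial_spec Finset.univ (Function.update α i (α i + 1))
  have he : ∀ j, Nat.factorial (Function.update α i (α i + 1) j)
      = Function.update (fun t => Nat.factorial (α t)) i (Nat.factorial (α i + 1)) j := by
    intro j
    rcases eq_or_ne j i with rfl | h
    · simp
    · simp [Function.update_of_ne h]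
  have hprod : ∏ j, Nat.factorial (Function.update α i (α i + 1) j)
      = Nat.factorial (α i + 1) * ∏ j ∈ Finset.univ.erase i, Nat.factorial (α j) := by
    rw [Finset.prod_congr rfl (fun j _ => he j),
      Finset.prod_update_of_mem (Finset.mem_univ i) (fun t => Nat.factorial (α t)),
      Finset.erase_eq]
  have hsum : ∑ j, Function.update α i (α i + 1) j = (∑ j, α j) + 1 := by
    rw [Finset.sum_update_of_mem (Finset.mem_univ i), ← Finset.erase_eq,
      ← Finset.add_sum_erase _ α (Finset.mem_univ i)]
    omega
  have hP : ∏ j, Nat.factorial (α j)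
      = Nat.factorial (α i) * ∏ j ∈ Finset.univ.erase i, Nat.factorial (α j) :=
    (Finset.mul_prod_erase _ _ (Finset.mem_univ i)).symm
  refine Nat.eq_of_mul_eq_mul_left
    (show 0 < ∏ j, Nat.factorial (α j) from Finset.prod_pos fun _ _ => Nat.factorial_pos _) ?_
  calc (∏ j, Nat.factorial (α j))
        * ((α i + 1) * Nat.multinomial Finset.univ (Function.update α i (α i + 1)))
      = ((α i + 1) * Nat.factorial (α i)) * ((∏ j ∈ Finset.univ.erase i, Nat.factorial (α j))
          * Nat.multinomial Finset.univ (Function.update α i (α i + 1))) := by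
        rw [hP]; ring
    _ = (Nat.factorial (α i + 1) * ∏ j ∈ Finset.univ.erase i, Nat.factorial (α j))
          * Nat.multinomial Finset.univ (Function.update α i (α i + 1)) := by
        rw [Nat.factorial_succ]; ring
    _ = (∏ j, Nat.factorial (Function.update α i (α i + 1) j))
          * Nat.multinomial Finset.univ (Function.update α i (α i + 1)) := by rw [hprod]
    _ = Nat.factorial (∑ j, Function.update α i (α i + 1) j) := h2
    _ = Nat.factorial ((∑ j, α j) + 1) := by rw [hsum]
    _ = ((∑ j, α j) + 1) * Nat.factorial (∑ j, α j) := Nat.factorial_succ _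
    _ = (∏ j, Nat.factorial (α j)) * (((∑ j, α j) + 1) * Nat.multinomial Finset.univ α) := by
        rw [← h1]; ring

lemma mult_step_real {k : ℕ} (d : Fin k →₀ ℕ) (i : Fin k) :
    (Nat.multinomial Finset.univ ⇑(d + Finsupp.single i 1 : Fin k →₀ ℕ) : ℝ) * ((d i : ℝ) + 1)
      = (Nat.multinomial Finset.univ ⇑d : ℝ) * ((∑ j, ((d j : ℕ) : ℝ)) + 1) := by
  rw [coe_add_single]
  have h' := congrArg (Nat.cast (R := ℝ)) (mult_succ (⇑d) i)
  push_cast at h'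
  linear_combination h'

lemma sum_weight_eq {k : ℕ} (γ : Fin k → ℕ) :
    ∑ i : Fin k, (γ i : ℝ) * ((i.1 : ℝ) + 1) = (isoDeg γ : ℝ) := by
  unfold isoDeg
  push_cast
  exact Finset.sum_congr rfl fun i _ => by ring

lemma coeff_X_pderiv_pderiv {k : ℕ} (j i1 : Fin k) (d : Fin k →₀ ℕ)
    (P : MvPolynomial (Fin k) ℝ) :
    MvPolynomial.coeff d (X j * pderiv i1 (pderiv j P))
      = (d j : ℝ) * (((d i1 : ℝ) + 1) * MvPolynomial.coeff (d + Finsupp.single i1 1) P) := by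
  classical
  rw [MvPolynomial.coeff_X_mul']
  by_cases hdj : d j = 0
  · simp [Finsupp.mem_support_iff, hdj]
  · rw [if_pos (Finsupp.mem_support_iff.mpr hdj)]
    rw [coeff_pderiv', coeff_pderiv']
    have hge : 1 ≤ d j := Nat.one_le_iff_ne_zero.mpr hdj
    have he : d - Finsupp.single j 1 + Finsupp.single i1 1 + Finsupp.single j 1
        = d + Finsupp.single i1 1 := by
      ext x
      simp only [Finsupp.add_apply, Finsupp.tsub_apply, Finsupp.single_apply]
      rcases eq_or_ne j x with rfl | hx
      · split_ifs <;> omega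
      · split_ifs <;> omega
    rw [he]
    have hcast : ((d j - 1 : ℕ) : ℝ) = (d j : ℝ) - 1 := by
      rw [Nat.cast_sub hge, Nat.cast_one]
    rcases eq_or_ne j i1 with rfl | hji
    · have e1 : (d - Finsupp.single j 1 : Fin k →₀ ℕ) j = d j - 1 := by
        rw [Finsupp.tsub_apply, Finsupp.single_eq_same]
      have e2 : (d - Finsupp.single j 1 + Finsupp.single j 1 : Fin k →₀ ℕ) j = d j := by
        rw [Finsupp.add_apply, Finsupp.tsub_apply, Finsupp.single_eq_same]
        omega
      rw [e1, e2, hcast]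
      ring
    · have e1 : (d - Finsupp.single j 1 : Fin k →₀ ℕ) i1 = d i1 := by
        rw [Finsupp.tsub_apply, Finsupp.single_apply, if_neg hji]
        omega
      have e2 : (d - Finsupp.single j 1 + Finsupp.single i1 1 : Fin k →₀ ℕ) j = d j - 1 := by
        rw [Finsupp.add_apply, Finsupp.tsub_apply, Finsupp.single_eq_same,
          Finsupp.single_apply, if_neg (Ne.symm hji)]
        omega
      rw [e1, e2, hcast]
      ring

lemma coeff_Gpoly (k n : ℕ) (m : Fin k →₀ ℕ) :
    MvPolynomial.coeff m (Gpoly k n)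
      = if isoDeg ⇑m = n then Aw (fun i => (i.1 + 1 : ℝ)) ⇑m else 0 := by
  classical
  unfold Gpoly WIP
  rw [MvPolynomial.coeff_sum]
  have hiff : ∀ α : Fin k → ℕ, (Finsupp.equivFunOnFinite.symm α = m) ↔ α = ⇑m := by
    intro α
    rw [Equiv.symm_apply_eq]
    exact Iff.rfl
  rw [Finset.sum_congr rfl (fun α _ => MvPolynomial.coeff_monomial m _ _),
    Finset.sum_congr rfl (fun α _ => if_congr (hiff α) rfl rfl),
    Finset.sum_ite_eq' (wipIndex k n) (⇑m) (fun α => Aw (fun i => (i.1 + 1 : ℝ)) α)]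
  by_cases hd : isoDeg ⇑m = n
  · rw [if_pos hd]
    rw [if_pos]
    unfold wipIndex
    rw [Finset.mem_filter]
    refine ⟨?_, hd⟩
    rw [Fintype.mem_piFinset]
    intro i
    rw [Finset.mem_range]
    have h1 : m i ≤ (i.1 + 1) * m i := Nat.le_mul_of_pos_left _ (by omega)
    have h2 : (i.1 + 1) * m i ≤ isoDeg ⇑m :=
      Finset.single_le_sum (f := fun t : Fin k => (t.1 + 1) * m t)
        (fun _ _ => Nat.zero_le _) (Finset.mem_univ i)
    omega
  · rw [if_neg hd, if_neg]
    intro hmem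
    unfold wipIndex at hmem
    rw [Finset.mem_filter] at hmem
    exact hd hmem.2

end Aux

/-- For every `k ≥ 2` and `n ≥ 1`, the generalized Lucas polynomial `G_n`
lies in the kernel of `T_1`. -/
theorem lucas_in_ker_T1 (k : ℕ) (hk : 2 ≤ k) (n : ℕ) (hn : 1 ≤ n) :
    Tm k hk 1 (Gpoly k n) = 0 := by
  classical
  apply MvPolynomial.ext
  intro d
  rw [MvPolynomial.coeff_zero]
  unfold Tm
  rw [MvPolynomial.coeff_sub, MvPolynomial.coeff_sub, MvPolynomial.coeff_sum,
    MvPolynomial.C_1, one_mul]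
  rw [coeff_pderiv', coeff_pderiv', coeff_pderiv']
  rw [Finset.sum_congr rfl fun j _ => coeff_X_pderiv_pderiv j _ d (Gpoly k n)]
  rw [← Finset.sum_mul]
  set i0 : Fin k := ⟨0, by omega⟩ with hi0
  set i1 : Fin k := ⟨1, by omega⟩ with hi1
  have hv0 : i0.1 = 0 := rfl
  have hv1 : i1.1 = 1 := rfl
  have hval : ((d + Finsupp.single i0 1 : Fin k →₀ ℕ) i0) = d i0 + 1 := by simp
  rw [hval]
  push_cast
  have hd1 : isoDeg ⇑(d + Finsupp.single i0 1 + Finsupp.single i0 1 : Fin k →₀ ℕ)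
      = isoDeg ⇑d + 2 := by
    rw [isoDeg_add_single, isoDeg_add_single, hv0]
  have hd2 : isoDeg ⇑(d + Finsupp.single i1 1 : Fin k →₀ ℕ) = isoDeg ⇑d + 2 := by
    rw [isoDeg_add_single, hv1]
  rw [coeff_Gpoly, coeff_Gpoly, hd1, hd2]
  by_cases hc : isoDeg ⇑d + 2 = n
  · simp only [if_pos hc]
    set S : ℝ := ∑ j, ((d j : ℕ) : ℝ) with hS
    have hSnn : 0 ≤ S := Finset.sum_nonneg fun _ _ => Nat.cast_nonneg _
    have hS1 : S + 1 ≠ 0 := by positivity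
    have hS2 : S + 2 ≠ 0 := by positivity
    have hM1 := mult_step_real d i0
    have hM3 := mult_step_real d i1
    have hM2 := mult_step_real (d + Finsupp.single i0 1) i0
    rw [hval, sum_coe_add_single] at hM2
    rw [Nat.cast_add, Nat.cast_one] at hM2
    rw [← hS] at hM1 hM2 hM3
    -- rewrite the Aw values
    have hden2 : ∑ j, (((d + Finsupp.single i0 1 + Finsupp.single i0 1 : Fin k →₀ ℕ) j : ℕ) : ℝ)
        = S + 2 := by
      rw [sum_coe_add_single, sum_coe_add_single]; ring
    have hden1 : ∑ j, (((d + Finsupp.single i1 1 : Fin k →₀ ℕ) j : ℕ) : ℝ) = S + 1 :=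
      sum_coe_add_single d i1
    simp only [Aw]
    rw [sum_weight_eq, sum_weight_eq, hd1, hd2, hc, hden1, hden2]
    have key1 : ((d i0 : ℝ) + 1) * (((d i0 : ℝ) + 1 + 1)
        * ((Nat.multinomial Finset.univ
            ⇑(d + Finsupp.single i0 1 + Finsupp.single i0 1 : Fin k →₀ ℕ) : ℝ) * (n : ℝ) / (S + 2)))
        = (Nat.multinomial Finset.univ ⇑d : ℝ) * (S + 1) * n := by
      field_simp
      simp only [Finsupp.coe_add] at hM1 hM2 ⊢
      linear_combination ((d i0 : ℝ) + 1) * hM2 + (S + 2) * hM1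
    have key2 : ((d i1 : ℝ) + 1) * ((Nat.multinomial Finset.univ
            ⇑(d + Finsupp.single i1 1 : Fin k →₀ ℕ) : ℝ) * (n : ℝ) / (S + 1))
        = (Nat.multinomial Finset.univ ⇑d : ℝ) * n := by
      field_simp
      simp only [Finsupp.coe_add] at hM3 ⊢
      linear_combination hM3
    linear_combination key1 + (-S - 1) * key2
  · simp only [if_neg hc]
    ring
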